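/- Let θ ∈ (0, π] be such that cos θ is transcendental. If a mixed graph G is non-bipartite, then the spectrum of H_θ(G) is not symmetric with respect to the origin. Consequently, for such θ, a mixed graph is bipartite if and only if its H_θ-spectrum is symmetric about the origin. -/

import Mathlib

open Polynomial Matrix Real

/-- The θ-Hermitian adjacency matrix of a mixed graph on `Fin n` with arc
relation `A` (no loops). -/
noncomputable def MGHerm {n : ℕ} (A : Fin n → Fin n → Bool) (θ : ℝ) : Matrix (Fin n) (Fin n) ℂ :=
  fun x y =>
    if A x y ∧ A y x then 1
    else if A x y then Complex.exp (θ * Complex.I)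
    else if A y x then Complex.exp (-θ * Complex.I)
    else 0

/-- A mixed graph is bipartite if its underlying graph is bipartite. -/
def MGBipartite {n : ℕ} (A : Fin n → Fin n → Bool) : Prop :=
  ∃ S : Set (Fin n), ∀ x y : Fin n, (A x y ∨ A y x) → (x ∈ S ↔ y ∉ S)

/-- The spectrum of `M` (as a root multiset of its characteristic polynomial)
is symmetric with respect to the origin, with multiplicities. -/
def SymSpec {n : ℕ} (M : Matrix (Fin n) (Fin n) ℂ) : Prop :=
  ∀ μ : ℂ, M.charpoly.rootMultiplicity μ = M.charpoly.rootMultiplicity (-μ)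

variable {m : Type*} [Fintype m] [DecidableEq m]

lemma my_charmatrix_eq {R : Type*} [CommRing R] (M : Matrix m m R) :
    charmatrix M = Matrix.diagonal (fun _ => (X : R[X])) - M.map C := by
  ext i j; simp [charmatrix_apply, Matrix.map_apply, Matrix.sub_apply]

section Herm
variable {M : Matrix m m ℂ} (hM : M.IsHermitian)

noncomputable def eigC (hM : M.IsHermitian) : m → ℂ := fun i => ((hM.eigenvalues i : ℝ) : ℂ)

lemma herm_u1 : (hM.eigenvectorUnitary : Matrix m m ℂ) * star (hM.eigenvectorUnitary : Matrix m m ℂ) = 1 :=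
  (Matrix.mem_unitaryGroup_iff).mp hM.eigenvectorUnitary.2

lemma herm_u2 : star (hM.eigenvectorUnitary : Matrix m m ℂ) * (hM.eigenvectorUnitary : Matrix m m ℂ) = 1 :=
  (Matrix.mem_unitaryGroup_iff').mp hM.eigenvectorUnitary.2

lemma herm_spec : M = (hM.eigenvectorUnitary : Matrix m m ℂ) * Matrix.diagonal (eigC hM)
    * star (hM.eigenvectorUnitary : Matrix m m ℂ) := by
  have := hM.spectral_theorem
  rw [Unitary.conjStarAlgAut_apply] at this
  exact this
lemma herm_neg_spec : -M = (hM.eigenvectorUnitary : Matrix m m ℂ) * Matrix.diagonal (fun i => -(eigC hM i))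
    * star (hM.eigenvectorUnitary : Matrix m m ℂ) := by
  rw [← Matrix.diagonal_neg]
  conv_lhs => rw [herm_spec hM]
  rw [Matrix.mul_neg, Matrix.neg_mul]
end Herm

section Herm2
variable {M : Matrix m m ℂ} (hM : M.IsHermitian)

lemma my_charpoly_conj' (U V N : Matrix m m ℂ) (hUV : U * V = 1) :
    (U * N * V).charpoly = N.charpoly := by
  have hmapUV : (U.map C) * (V.map C) = (1 : Matrix m m ℂ[X]) := by
    rw [← Matrix.map_mul, hUV]; simp [Matrix.map_one]
  have hdiag : ∀ N : Matrix m m ℂ, Matrix.diagonal (fun _ => (X : ℂ[X])) - N.map C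
      = (X : ℂ[X]) • (1 : Matrix m m ℂ[X]) - N.map C := by
    intro N; congr 1; ext i j
    by_cases h : i = j <;> simp [Matrix.diagonal_apply, Matrix.one_apply, h]
  have key : charmatrix (U * N * V) = (U.map C) * charmatrix N * (V.map C) := by
    rw [my_charmatrix_eq, my_charmatrix_eq, hdiag, hdiag]
    rw [Matrix.map_mul, Matrix.map_mul]
    rw [Matrix.mul_sub, Matrix.sub_mul]
    congr 1
    rw [Matrix.mul_smul, Matrix.smul_mul, mul_one, hmapUV]
  rw [Matrix.charpoly, Matrix.charpoly, key, Matrix.det_mul, Matrix.det_mul]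
  rw [mul_comm (Matrix.det (U.map C)), mul_assoc, ← Matrix.det_mul, hmapUV]
  simp

lemma my_charpoly_diagonal (d : m → ℂ) :
    (Matrix.diagonal d).charpoly = ∏ i, (X - C (d i)) := by
  have : charmatrix (Matrix.diagonal d) = Matrix.diagonal (fun i => X - C (d i)) := by
    ext i j
    by_cases h : i = j
    · subst h; simp [charmatrix_apply, Matrix.diagonal_apply]
    · simp [charmatrix_apply, Matrix.diagonal_apply, h]
  rw [Matrix.charpoly, this, Matrix.det_diagonal]

lemma herm_charpoly : M.charpoly = ∏ i, (X - C (eigC hM i)) := by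
  conv_lhs => rw [herm_spec hM]
  rw [my_charpoly_conj' _ _ _ (herm_u1 hM), my_charpoly_diagonal]

lemma herm_neg_charpoly : (-M).charpoly = ∏ i, (X - C (-(eigC hM i))) := by
  conv_lhs => rw [herm_neg_spec hM]
  rw [my_charpoly_conj' _ _ _ (herm_u1 hM), my_charpoly_diagonal]

omit [DecidableEq m] in
lemma myRootsProd (E : m → ℂ) :
    (∏ i, (X - C (E i))).roots = Multiset.map E Finset.univ.val := by
  have h1 : (∏ i, (X - C (E i))) = (Multiset.map (fun a => X - C a) (Multiset.map E Finset.univ.val)).prod := by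
    rw [Multiset.map_map]
    rfl
  rw [h1, Polynomial.roots_multiset_prod_X_sub_C]

lemma herm_roots : M.charpoly.roots = Multiset.map (eigC hM) Finset.univ.val := by
  rw [herm_charpoly hM, myRootsProd]

lemma myConjPow (u D N : Matrix m m ℂ) (h1 : u * star u = 1) (h2 : star u * u = 1)
    (hN : N = u * D * star u) (k : ℕ) : N ^ k = u * D ^ k * star u := by
  induction k with
  | zero => simp [pow_zero, h1]
  | succ k ih =>
    rw [pow_succ, ih, hN, pow_succ]
    have h3 : star u * (u * D * star u) = D * star u := by
      rw [← mul_assoc, ← mul_assoc, h2, one_mul]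
    rw [mul_assoc (u * D ^ k), h3, ← mul_assoc, ← mul_assoc]

lemma herm_trace_pow (k : ℕ) : (M ^ k).trace = ∑ i, (eigC hM i) ^ k := by
  rw [myConjPow _ (Matrix.diagonal (eigC hM)) M (herm_u1 hM) (herm_u2 hM) (herm_spec hM) k,
    Matrix.trace_mul_comm, ← mul_assoc, herm_u2 hM, one_mul, Matrix.diagonal_pow,
    Matrix.trace_diagonal]
  simp
end Herm2

lemma my_exp_conj (θ : ℝ) :
    (starRingEnd ℂ) (Complex.exp (θ * Complex.I)) = Complex.exp (-(θ * Complex.I)) := by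
  rw [← Complex.exp_conj]
  congr 1
  simp [_root_.map_mul, Complex.conj_I, Complex.conj_ofReal]

lemma my_exp_conj2 (θ : ℝ) :
    (starRingEnd ℂ) (Complex.exp (-(θ * Complex.I))) = Complex.exp (θ * Complex.I) := by
  rw [← Complex.exp_conj]
  congr 1
  simp [_root_.map_mul, Complex.conj_I, Complex.conj_ofReal]

lemma mgherm_isHermitian {n : ℕ} (A : Fin n → Fin n → Bool) (θ : ℝ) :
    (MGHerm A θ).IsHermitian := by
  have h1 := my_exp_conj θ
  have h2 := my_exp_conj2 θ
  ext x y
  rw [Matrix.conjTranspose_apply]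
  unfold MGHerm
  by_cases ha : A y x <;> by_cases hb : A x y <;>
    simp [ha, hb, h1, h2, neg_mul]

lemma symspec_trace {n : ℕ} (M : Matrix (Fin n) (Fin n) ℂ) (hM : M.IsHermitian)
    (hsym : SymSpec M) {k : ℕ} (hk : Odd k) : (M ^ k).trace = 0 := by
  classical
  set s := Multiset.map (eigC hM) Finset.univ.val with hs
  have hroots : M.charpoly.roots = s := herm_roots hM
  have hcount : ∀ μ : ℂ, s.count μ = s.count (-μ) := by
    intro μ
    have h := hsym μ
    rw [← Polynomial.count_roots, ← Polynomial.count_roots, hroots] at h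
    exact h
  have hnegmap : s.map (fun x => -x) = s := by
    ext a
    have h1 := Multiset.count_map_eq_count' (fun x : ℂ => -x) s neg_injective (-a)
    rw [neg_neg] at h1
    rw [h1, hcount (-a), neg_neg]
  have hT : (s.map (· ^ k)).sum = 0 := by
    have h2 : (s.map (· ^ k)).sum = -(s.map (· ^ k)).sum := by
      conv_lhs => rw [← hnegmap, Multiset.map_map]
      have h3 : ((· ^ k) ∘ fun x : ℂ => -x) = (fun y : ℂ => -y) ∘ (· ^ k) := by
        funext x
        simp [Function.comp, Odd.neg_pow hk]
      rw [h3, ← Multiset.map_map]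
      generalize (s.map (· ^ k)) = t
      induction t using Multiset.induction with
      | empty => simp
      | cons a t ih => simp [ih]; ring
    exact add_self_eq_zero.mp (eq_neg_iff_add_eq_zero.mp h2)
  rw [herm_trace_pow hM k]
  have h4 : ∑ i, (eigC hM i) ^ k = (s.map (· ^ k)).sum := by
    rw [hs, Multiset.map_map]
    rfl
  rw [h4, hT]

lemma mgherm_zero_of_not_rel {n : ℕ} (A : Fin n → Fin n → Bool) (θ : ℝ) {x y : Fin n}
    (h1 : ¬ A x y = true) (h2 : ¬ A y x = true) : MGHerm A θ x y = 0 := by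
  simp [MGHerm, h1, h2]

lemma bip_symspec {n : ℕ} (A : Fin n → Fin n → Bool) (θ : ℝ)
    (hbip : MGBipartite A) : SymSpec (MGHerm A θ) := by
  classical
  obtain ⟨S, hS⟩ := hbip
  set M := MGHerm A θ with hMdef
  have hH : M.IsHermitian := mgherm_isHermitian A θ
  set d : Fin n → ℂ := fun v => if v ∈ S then 1 else -1 with hd
  have hDD : Matrix.diagonal d * Matrix.diagonal d = 1 := by
    rw [Matrix.diagonal_mul_diagonal]
    have : (fun i => d i * d i) = fun _ => (1 : ℂ) := by
      funext i
      by_cases h : i ∈ S <;> simp [hd, h]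
    rw [this, Matrix.diagonal_one]
  have hcon : Matrix.diagonal d * M * Matrix.diagonal d = -M := by
    ext x y
    rw [Matrix.mul_diagonal, Matrix.diagonal_mul, Matrix.neg_apply]
    by_cases hrel : A x y = true ∨ A y x = true
    · have hxy := hS x y hrel
      have hdd : d x * d y = -1 := by
        by_cases hx : x ∈ S
        · have hy := hxy.mp hx
          simp [hd, hx, hy]
        · have hy : y ∈ S := by
            by_contra hy
            exact hx (hxy.mpr hy)
          simp [hd, hx, hy]
      calc d x * M x y * d y = (d x * d y) * M x y := by ring
        _ = -M x y := by rw [hdd]; ring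
    · push_neg at hrel
      rw [show M x y = 0 from mgherm_zero_of_not_rel A θ hrel.1 hrel.2]
      ring
  have hchar : (-M).charpoly = M.charpoly := by
    rw [← hcon]
    exact my_charpoly_conj' _ _ _ hDD
  intro μ
  rw [← Polynomial.count_roots, ← Polynomial.count_roots, herm_roots hH]
  have hnr : (-M).charpoly.roots = (Multiset.map (eigC hH) Finset.univ.val).map (fun x => -x) := by
    rw [herm_neg_charpoly hH]
    have : (∏ i, (X - C (-(eigC hH i)))) = ∏ i, (X - C ((fun x => -x) (eigC hH i))) := rfl
    rw [this]
    rw [show (fun i => X - C ((fun x : ℂ => -x) (eigC hH i))) = (fun i => X - C (((fun x : ℂ => -x) ∘ eigC hH) i)) from rfl]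
    rw [myRootsProd (((fun x : ℂ => -x) ∘ eigC hH)), ← Multiset.map_map]
  have heq : Multiset.map (eigC hH) Finset.univ.val
      = (Multiset.map (eigC hH) Finset.univ.val).map (fun x => -x) := by
    rw [← hnr, hchar, herm_roots hH]
  conv_lhs => rw [heq]
  have h1 := Multiset.count_map_eq_count' (fun x : ℂ => -x) (Multiset.map (eigC hH) Finset.univ.val) neg_injective (-μ)
  rw [neg_neg] at h1
  rw [h1]

def mgGraph {n : ℕ} (A : Fin n → Fin n → Bool) : SimpleGraph (Fin n) :=
  SimpleGraph.fromRel (fun x y => A x y = true)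

lemma bip_of_even {n : ℕ} (A : Fin n → Fin n → Bool) (hA : ∀ v, A v v = false)
    (h : ∀ (v : Fin n) (w : (mgGraph A).Walk v v), Even w.length) : MGBipartite A := by
  classical
  set G := mgGraph A with hG
  have hpar : ∀ (ρ x : Fin n) (w1 w2 : G.Walk ρ x), (Odd w1.length ↔ Odd w2.length) := by
    intro ρ x w1 w2
    have hc := h ρ (w1.append w2.reverse)
    rw [SimpleGraph.Walk.length_append, SimpleGraph.Walk.length_reverse] at hc
    rw [Nat.even_add] at hc
    rw [← Nat.not_even_iff_odd, ← Nat.not_even_iff_odd]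
    tauto
  set S : Set (Fin n) :=
    {v | ∃ w : G.Walk (Quot.out (G.connectedComponentMk v)) v, Odd w.length} with hSdef
  have step : ∀ x y, G.Adj x y → ((x ∈ S → y ∉ S) ∧ (x ∉ S → y ∈ S)) := by
    intro x y hadj
    have hc : G.connectedComponentMk x = G.connectedComponentMk y :=
      SimpleGraph.ConnectedComponent.connectedComponentMk_eq_of_adj hadj
    constructor
    · rintro ⟨w1, hw1⟩ hyS
      have hyS' : ∃ w : G.Walk (Quot.out (G.connectedComponentMk y)) y, Odd w.length := hyS
      rw [← hc] at hyS'
      obtain ⟨w2, hw2⟩ := hyS'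
      have hw3 := (hpar _ x w1 (w2.append (SimpleGraph.Walk.cons hadj.symm SimpleGraph.Walk.nil))).mp hw1
      rw [SimpleGraph.Walk.length_append, SimpleGraph.Walk.length_cons,
        SimpleGraph.Walk.length_nil] at hw3
      rw [Nat.odd_iff] at hw2 hw3
      omega
    · intro hx
      have hreach : G.Reachable (Quot.out (G.connectedComponentMk x)) x := by
        apply SimpleGraph.ConnectedComponent.exact
        exact Quot.out_eq _
      obtain ⟨w⟩ := hreach
      have hwe : Even w.length := by
        rw [← Nat.not_odd_iff_even]
        exact fun ho => hx ⟨w, ho⟩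
      show ∃ w' : G.Walk (Quot.out (G.connectedComponentMk y)) y, Odd w'.length
      rw [← hc]
      refine ⟨w.append (SimpleGraph.Walk.cons hadj SimpleGraph.Walk.nil), ?_⟩
      rw [SimpleGraph.Walk.length_append, SimpleGraph.Walk.length_cons,
        SimpleGraph.Walk.length_nil]
      rw [Nat.odd_iff]
      rw [Nat.even_iff] at hwe
      omega
  refine ⟨S, ?_⟩
  intro x y hrel
  have hne : x ≠ y := by
    rintro rfl
    simp [hA x] at hrel
  have hadj : G.Adj x y := by
    rw [hG]
    show (SimpleGraph.fromRel _).Adj x y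
    rw [SimpleGraph.fromRel_adj]
    exact ⟨hne, hrel⟩
  exact ⟨(step x y hadj).1, fun hy => by
    by_contra hx
    exact hy ((step x y hadj).2 hx)⟩

def Nmat {n : ℕ} (A : Fin n → Fin n → Bool) : Matrix (Fin n) (Fin n) ℕ :=
  fun x y => if A x y = true ∨ A y x = true then 1 else 0

lemma walk_entry {n : ℕ} (A : Fin n → Fin n → Bool) {x y : Fin n}
    (w : (mgGraph A).Walk x y) : 1 ≤ ((Nmat A) ^ w.length) x y := by
  induction w with
  | nil => simp [pow_zero, Matrix.one_apply]
  | @cons a b c hadj p ih =>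
    rw [SimpleGraph.Walk.length_cons, pow_succ', Matrix.mul_apply]
    have hab : Nmat A a b = 1 := by
      have := ((SimpleGraph.fromRel_adj _ a b).mp hadj).2
      simp only [Nmat, if_pos this]
    calc 1 ≤ Nmat A a b * ((Nmat A) ^ p.length) b c := by rw [hab, one_mul]; exact ih
      _ ≤ _ := Finset.single_le_sum (f := fun j => Nmat A a j * ((Nmat A) ^ p.length) j c) (fun i _ => Nat.zero_le _) (Finset.mem_univ b)

noncomputable def zC (θ : ℝ) : ℂ := Complex.exp (θ * Complex.I)

lemma zC_ne (θ : ℝ) : zC θ ≠ 0 := Complex.exp_ne_zero _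

noncomputable def zhom (θ : ℝ) : Multiplicative ℤ →* ℂ where
  toFun s := zC θ ^ (Multiplicative.toAdd s)
  map_one' := by simp
  map_mul' a b := by
    simp only [toAdd_mul]
    exact zpow_add₀ (zC_ne θ) _ _

noncomputable def phi1 (θ : ℝ) : AddMonoidAlgebra ℕ ℤ →ₐ[ℕ] ℂ :=
  (AddMonoidAlgebra.lift ℕ ℂ ℤ) (zhom θ)

noncomputable def phi2 : AddMonoidAlgebra ℕ ℤ →ₐ[ℕ] ℕ :=
  (AddMonoidAlgebra.lift ℕ ℕ ℤ) 1

lemma phi1_single (θ : ℝ) (s : ℤ) (b : ℕ) :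
    phi1 θ (AddMonoidAlgebra.single s b) = b * zC θ ^ s := by
  rw [phi1, AddMonoidAlgebra.lift_single]
  simp [zhom]

lemma phi2_single (s : ℤ) (b : ℕ) : phi2 (AddMonoidAlgebra.single s b) = b := by
  rw [phi2, AddMonoidAlgebra.lift_single]
  simp

def epsZ {n : ℕ} (A : Fin n → Fin n → Bool) (x y : Fin n) : ℤ :=
  if A x y = true ∧ A y x = true then 0 else if A x y = true then 1 else -1

noncomputable def Pmat {n : ℕ} (A : Fin n → Fin n → Bool) :
    Matrix (Fin n) (Fin n) (AddMonoidAlgebra ℕ ℤ) :=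
  fun x y => if A x y = true ∨ A y x = true then AddMonoidAlgebra.single (epsZ A x y) 1 else 0

lemma map_phi1 {n : ℕ} (A : Fin n → Fin n → Bool) (θ : ℝ) :
    (Pmat A).map (phi1 θ) = MGHerm A θ := by
  ext x y
  rw [Matrix.map_apply]
  by_cases h1 : A x y = true <;> by_cases h2 : A y x = true
  · have hp : Pmat A x y = AddMonoidAlgebra.single 0 1 := by
      simp [Pmat, epsZ, h1, h2]
    rw [hp, phi1_single]
    simp [MGHerm, h1, h2, zC]
  · have hp : Pmat A x y = AddMonoidAlgebra.single 1 1 := by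
      simp [Pmat, epsZ, h1, h2]
    rw [hp, phi1_single]
    simp [MGHerm, h1, h2, zC]
  · have hp : Pmat A x y = AddMonoidAlgebra.single (-1) 1 := by
      simp [Pmat, epsZ, h1, h2]
    rw [hp, phi1_single]
    simp only [Nat.cast_one, one_mul, _root_.zpow_neg_one]
    rw [zC, ← Complex.exp_neg, ← neg_mul]
    simp [MGHerm, h1, h2]
  · have hp : Pmat A x y = 0 := by
      simp [Pmat, h1, h2]
    rw [hp, map_zero]
    simp [MGHerm, h1, h2]

lemma map_phi2 {n : ℕ} (A : Fin n → Fin n → Bool) :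
    (Pmat A).map phi2 = Nmat A := by
  ext x y
  rw [Matrix.map_apply]
  by_cases h : A x y = true ∨ A y x = true
  · have hp : Pmat A x y = AddMonoidAlgebra.single (epsZ A x y) 1 := if_pos h
    rw [hp, phi2_single]
    simp [Nmat, h]
  · have hp : Pmat A x y = 0 := if_neg h
    rw [hp, map_zero]
    simp [Nmat, h]

lemma trace_map_hom {n : ℕ} {R S : Type*} [CommSemiring R] [CommSemiring S] [Algebra ℕ R]
    [Algebra ℕ S] (φ : R →ₐ[ℕ] S) (Q : Matrix (Fin n) (Fin n) R) :
    (Q.map φ).trace = φ Q.trace := by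
  simp [Matrix.trace, Matrix.diag, Matrix.map_apply, map_sum]

lemma pow_map_hom {n : ℕ} {R S : Type*} [CommSemiring R] [CommSemiring S] [Algebra ℕ R]
    [Algebra ℕ S] (φ : R →ₐ[ℕ] S) (Q : Matrix (Fin n) (Fin n) R) (k : ℕ) :
    (Q ^ k).map φ = (Q.map φ) ^ k := by
  have h := map_pow (φ.mapMatrix (m := Fin n)) Q k
  rw [AlgHom.mapMatrix_apply, AlgHom.mapMatrix_apply] at h
  exact h

lemma z_transcendental (θ : ℝ) (htr : Transcendental ℚ (Real.cos θ)) :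
    Transcendental ℚ (zC θ) := by
  intro halg
  apply htr
  have h1 : IsAlgebraic ℚ (zC θ)⁻¹ := halg.inv
  have h2 : IsAlgebraic ℚ (zC θ + (zC θ)⁻¹) :=
    isAlgebraic_iff_isIntegral.mpr
      ((isAlgebraic_iff_isIntegral.mp halg).add (isAlgebraic_iff_isIntegral.mp h1))
  have h3 : IsAlgebraic ℚ (((1/2 : ℚ) : ℂ)) := isAlgebraic_rat ℚ (1/2)
  have h4 : IsAlgebraic ℚ ((zC θ + (zC θ)⁻¹) * ((1/2 : ℚ) : ℂ)) :=
    isAlgebraic_iff_isIntegral.mpr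
      ((isAlgebraic_iff_isIntegral.mp h2).mul (isAlgebraic_iff_isIntegral.mp h3))
  have h5 : ((Real.cos θ : ℝ) : ℂ) = (zC θ + (zC θ)⁻¹) * ((1/2 : ℚ) : ℂ) := by
    rw [Complex.ofReal_cos, Complex.cos, zC]
    rw [← Complex.exp_neg, neg_mul]
    push_cast
    ring
  rw [← h5] at h4
  have f : ℝ →ₐ[ℚ] ℂ := RingHom.toRatAlgHom Complex.ofRealHom
  exact (isAlgebraic_algHom_iff (RingHom.toRatAlgHom Complex.ofRealHom)
    Complex.ofReal_injective).mp h4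

lemma notbip_notsym {n : ℕ} (A : Fin n → Fin n → Bool) (θ : ℝ)
    (htr : Transcendental ℚ (Real.cos θ)) (hA : ∀ v, A v v = false)
    (hnb : ¬ MGBipartite A) : ¬ SymSpec (MGHerm A θ) := by
  classical
  intro hsym
  have hodd : ∃ (v : Fin n) (k : ℕ), Odd k ∧ 1 ≤ ((Nmat A) ^ k) v v := by
    by_contra hcon
    push_neg at hcon
    apply hnb
    apply bip_of_even A hA
    intro v w
    by_contra hodd'
    rw [Nat.not_even_iff_odd] at hodd'
    have h1 := walk_entry A w
    have h2 := hcon v w.length hodd'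
    omega
  obtain ⟨v, k, hk, hvk⟩ := hodd
  set z := zC θ with hzdef
  set r := ((Pmat A) ^ k).trace with hrdef
  have hφ2 : phi2 r = ((Nmat A) ^ k).trace := by
    rw [hrdef, ← trace_map_hom, pow_map_hom, map_phi2]
  have htrge : 1 ≤ ((Nmat A) ^ k).trace := by
    have : ((Nmat A) ^ k) v v ≤ ((Nmat A) ^ k).trace :=
      Finset.single_le_sum (f := fun i => ((Nmat A) ^ k) i i)
        (fun i _ => Nat.zero_le _) (Finset.mem_univ v)
    omega
  have hrne : r ≠ 0 := by
    intro h0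
    rw [h0, map_zero] at hφ2
    omega
  have hφ1 : phi1 θ r = 0 := by
    rw [hrdef, ← trace_map_hom, pow_map_hom, map_phi1]
    exact symspec_trace _ (mgherm_isHermitian A θ) hsym hk
  apply z_transcendental θ htr
  have hsupp : r.coeff.support.Nonempty := Finsupp.support_nonempty_iff.mpr (AddMonoidAlgebra.coeff_eq_zero.not.mpr hrne)
  set m0 := r.coeff.support.min' hsupp with hm0
  refine ⟨∑ s ∈ r.coeff.support, Polynomial.C ((r.coeff s : ℚ)) * Polynomial.X ^ (s - m0).toNat, ?_, ?_⟩
  · intro h0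
    have hc0 := congrArg (fun p => Polynomial.coeff p 0) h0
    simp only [Polynomial.finset_sum_coeff, Polynomial.coeff_zero] at hc0
    rw [Finset.sum_eq_single m0] at hc0
    · rw [Polynomial.coeff_C_mul, Polynomial.coeff_X_pow] at hc0
      have : ((m0 : ℤ) - m0).toNat = 0 := by simp
      rw [this, if_pos rfl, mul_one] at hc0
      have hmem := r.coeff.support.min'_mem hsupp
      rw [Finsupp.mem_support_iff] at hmem
      exact hmem (by exact_mod_cast hc0)
    · intro s hs hne
      rw [Polynomial.coeff_C_mul, Polynomial.coeff_X_pow]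
      have hlt : m0 < s := lt_of_le_of_ne (r.coeff.support.min'_le s hs) (fun h => hne h.symm)
      rw [if_neg (by omega), mul_zero]
    · intro habs
      exact absurd (r.coeff.support.min'_mem hsupp) habs
  · rw [map_sum]
    have hφ1' : ∑ s ∈ r.coeff.support, (r.coeff s : ℂ) * z ^ s = 0 := by
      have h := AddMonoidAlgebra.lift_apply (zhom θ) r
      rw [show ((AddMonoidAlgebra.lift ℕ ℂ ℤ) (zhom θ)) r = phi1 θ r from rfl, hφ1] at h
      rw [Finsupp.sum] at h
      rw [show ∑ s ∈ r.coeff.support, (r.coeff s : ℂ) * z ^ s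
          = ∑ a ∈ r.coeff.support, (r.coeff a) • (zhom θ) (Multiplicative.ofAdd a) from
        Finset.sum_congr rfl (fun s hs => by simp [zhom, nsmul_eq_mul, hzdef])]
      exact h.symm
    have hterm : ∀ s ∈ r.coeff.support,
        (Polynomial.aeval z) (Polynomial.C ((r.coeff s : ℚ)) * Polynomial.X ^ (s - m0).toNat)
          = ((r.coeff s : ℂ) * z ^ s) * (z ^ m0)⁻¹ := by
      intro s hs
      rw [_root_.map_mul, _root_.map_pow, Polynomial.aeval_C, Polynomial.aeval_X]
      have hge : m0 ≤ s := r.coeff.support.min'_le s hs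
      have hzp : z ^ ((s - m0).toNat : ℤ) = z ^ s * (z ^ m0)⁻¹ := by
        rw [Int.toNat_of_nonneg (by omega), zpow_sub₀ (zC_ne θ), div_eq_mul_inv]
      rw [← zpow_natCast z, hzp]
      have hcast : (algebraMap ℚ ℂ) ((r.coeff s : ℚ)) = (r.coeff s : ℂ) := by
        simp
      rw [hcast]
      ring
    rw [Finset.sum_congr rfl hterm, ← Finset.sum_mul, hφ1', zero_mul]

theorem bipartite_detection_of_cos_transcendental (θ : ℝ) (hθ : θ ∈ Set.Ioc (0 : ℝ) Real.pi)
    (htr : Transcendental ℚ (Real.cos θ)) {n : ℕ} (A : Fin n → Fin n → Bool)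
    (hA : ∀ v, A v v = false) :
    (¬ MGBipartite A → ¬ SymSpec (MGHerm A θ)) ∧ (MGBipartite A ↔ SymSpec (MGHerm A θ)) := by
  have part1 : ¬ MGBipartite A → ¬ SymSpec (MGHerm A θ) := fun hnb =>
    notbip_notsym A θ htr hA hnb
  exact ⟨part1, ⟨fun hb => bip_symspec A θ hb, fun hs => by
    by_contra hb
    exact part1 hb hs⟩⟩
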